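/- Let G = C_n ⊕ C_{mn} with basis (e_1, e_2), ord(e_1) = n ≥ 2 even, ord(e_2) = mn. Define V_j = e_2^{mn−1}·((−1)^{j+1}e_1 + (j+1)e_2)·((−1)^{j+1}e_1 − j e_2)·((−1)^{j+1}e_1)^{n−2} for j ∈ [0, mn−1]. Then each V_j is an atom of length mn + n − 1, and the product E_2 = V_0···V_{mn−1} satisfies: E_2 · e_2^{−(mn−1)mn} is a product of atoms of length 2. -/

import Mathlib

open scoped Pointwise

section Defs

variable (G : Type*) [AddCommGroup G]

/-- `S` is a minimal zero-sum sequence (an atom of the monoid `B(G)` of zero-sum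
sequences): it is nonempty, has sum zero, and no proper nonempty subsequence has sum zero. -/
def IsMinZS (S : Multiset G) : Prop :=
  S ≠ 0 ∧ S.sum = 0 ∧ ∀ T : Multiset G, T ≤ S → T ≠ 0 → T ≠ S → T.sum ≠ 0

/-- `S` is a product of `k` atoms of `B(G)`. -/
def IsProdOfAtoms (k : ℕ) (S : Multiset G) : Prop :=
  ∃ L : Multiset (Multiset G), Multiset.card L = k ∧ (∀ U ∈ L, IsMinZS G U) ∧ L.sum = S

/-- `S` is a product of atoms of length `2`. -/
def IsProd2Atoms (S : Multiset G) : Prop :=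
  ∃ L : Multiset (Multiset G), (∀ U ∈ L, IsMinZS G U ∧ Multiset.card U = 2) ∧ L.sum = S

/-- The set of lengths of `A` in `B(G)`. -/
def LSet (A : Multiset G) : Set ℕ := { k | IsProdOfAtoms G k A }

/-- `U_k(G)`: the set of `m` such that some product of `k` atoms equals a product of `m` atoms. -/
def UkSet (k : ℕ) : Set ℕ :=
  { m | ∃ S : Multiset G, IsProdOfAtoms G k S ∧ IsProdOfAtoms G m S }

/-- `ρ_k(G) = sup U_k(G)`. -/
noncomputable def rho (k : ℕ) : ℕ := sSup (UkSet G k)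

/-- The Davenport constant `D(G)`: the maximal length of a minimal zero-sum sequence. -/
noncomputable def Dav : ℕ :=
  sSup { n : ℕ | ∃ S : Multiset G, IsMinZS G S ∧ Multiset.card S = n }

/-- `A` is pair-nice with factorization into `2k` atoms of length `d` (where `d` plays
the role of `D^*(G)`). -/
def PairNiceWith (d k : ℕ) (A : Multiset G) : Prop :=
  1 ≤ k ∧ ∃ (U : Fin (2 * k) → Multiset G) (g : Fin (2 * k) → G),
    (∀ i, IsMinZS G (U i) ∧ Multiset.card (U i) = d) ∧
    (∑ i, U i) = A ∧ (∀ i, g i ∈ U i) ∧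
    IsProd2Atoms G (∑ i, ({g i} : Multiset G))

/-- `A` is pair-nice (with respect to `G`, with `d = D^*(G)`). -/
def PairNice (d : ℕ) (A : Multiset G) : Prop := ∃ k, PairNiceWith G d k A

/-- `A` is nice with factorization into `2k+1` atoms of length `d` (where `d` plays the
role of `D^*(G)`), as in Definition 3.1 of the paper. -/
def NiceWith [DecidableEq G] (d k : ℕ) (A : Multiset G) : Prop :=
  1 ≤ k ∧ ∃ (U : Fin (2 * k + 1) → Multiset G) (g : Fin (2 * k + 1) → G),
    (∀ i, IsMinZS G (U i) ∧ Multiset.card (U i) = d) ∧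
    (∑ i, U i) = A ∧ (∀ i, g i ∈ U i) ∧
    ((Odd d ∧ IsProd2Atoms G (A - ∑ i, ({g i} : Multiset G)) ∧
        ∃ W : Fin k → Multiset G, (∀ j, IsMinZS G (W j)) ∧
          (∀ j : Fin k, Multiset.card (W j) = if (j : ℕ) = 0 then 3 else 2) ∧
          (∑ j, W j) = ∑ i, ({g i} : Multiset G)) ∨
      (Even d ∧ ∃ h : G, h ∈ A - ∑ i, ({g i} : Multiset G) ∧
        IsProd2Atoms G (A - ((∑ i, ({g i} : Multiset G)) + {h})) ∧
        IsProd2Atoms G ((∑ i, ({g i} : Multiset G)) + {h})))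

/-- `A` is nice (with respect to `G`, with `d = D^*(G)`). -/
def Nice [DecidableEq G] (d : ℕ) (A : Multiset G) : Prop := ∃ k, NiceWith G d k A

end Defs

section MonoidDefs

variable (H : Type*) [CommMonoid H]

/-- `U_k(H)` for a monoid `H`: the set of `m` such that some product of `k` irreducible
elements (atoms) of `H` equals a product of `m` atoms. -/
def UkM (k : ℕ) : Set ℕ :=
  { m | ∃ L L' : Multiset H, Multiset.card L = k ∧ Multiset.card L' = m ∧
      (∀ u ∈ L, Irreducible u) ∧ (∀ v ∈ L', Irreducible v) ∧ L.prod = L'.prod }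

/-- `ρ_k(H) = sup U_k(H)`. -/
noncomputable def rhoM (k : ℕ) : ℕ := sSup (UkM H k)

end MonoidDefs

section MyHelpers

lemma my_le_add_decomp {α : Type*} [DecidableEq α] {T A B : Multiset α}
    (h : T ≤ A + B) : ∃ A' B', A' ≤ A ∧ B' ≤ B ∧ T = A' + B' :=
  ⟨T - B, T ∩ B, Multiset.sub_le_iff_le_add.2 h, Multiset.inter_le_right,
    (Multiset.sub_add_inter T B).symm⟩

lemma my_pair_isMinZS {G : Type*} [AddCommGroup G] [DecidableEq G] {g h : G}
    (hg : g ≠ 0) (hh : h ≠ 0) (hs : g + h = 0) :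
    IsMinZS G {g, h} ∧ Multiset.card ({g, h} : Multiset G) = 2 := by
  have hgh : ({g, h} : Multiset G) = {g} + {h} := rfl
  refine ⟨⟨by simp, by simp [hs], ?_⟩, Multiset.card_pair g h⟩
  intro T hT hT0 hTne
  rw [hgh] at hT
  obtain ⟨A', B', hA, hB, rfl⟩ := my_le_add_decomp hT
  rcases Multiset.le_singleton.1 hA with rfl | rfl <;>
    rcases Multiset.le_singleton.1 hB with rfl | rfl <;> simp_all

end MyHelpers
/-- In `G = C_n ⊕ C_{mn}` with `n` even, the sequences
`V_j = e₂^{mn-1}·((-1)^{j+1}e₁+(j+1)e₂)·((-1)^{j+1}e₁-j e₂)·((-1)^{j+1}e₁)^{n-2}`,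
`j ∈ [0, mn-1]`, are atoms of length `mn + n - 1`, and
`E₂ = V₀···V_{mn-1}` with all `(mn-1)·mn` copies of `e₂` removed is a product of
atoms of length `2`. -/
theorem stmt17 (n m : ℕ) (hn : 1 < n) (hneven : Even n) (hm : 1 ≤ m)
    (e1 e2 : ZMod n × ZMod (m * n)) (he1 : e1 = (1, 0)) (he2 : e2 = (0, 1))
    (V : ℕ → Multiset (ZMod n × ZMod (m * n)))
    (hV : ∀ j : ℕ, V j = Multiset.replicate (m * n - 1) e2 +
      {((-1 : ℤ) ^ (j + 1)) • e1 + ((j : ℤ) + 1) • e2,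
       ((-1 : ℤ) ^ (j + 1)) • e1 - (j : ℤ) • e2} +
      Multiset.replicate (n - 2) (((-1 : ℤ) ^ (j + 1)) • e1)) :
    (∀ j < m * n, IsMinZS (ZMod n × ZMod (m * n)) (V j) ∧
      Multiset.card (V j) = m * n + n - 1) ∧
    IsProd2Atoms (ZMod n × ZMod (m * n))
      ((∑ j ∈ Finset.range (m * n), V j) -
        Multiset.replicate ((m * n - 1) * (m * n)) e2) := by
  have hn2 : 2 ≤ n := hn
  have hmn2 : 2 ≤ m * n := le_trans hn2 (Nat.le_mul_of_pos_left n hm)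
  haveI : NeZero n := ⟨by omega⟩
  haveI : NeZero (m * n) := ⟨by omega⟩
  haveI : Fact (1 < n) := ⟨hn⟩
  haveI : Fact (1 < m * n) := ⟨hmn2⟩
  subst he1 he2
  -- coordinates of the building blocks
  have hε2 : ∀ j : ℕ, ((-1:ℤ)^(j+1) : ZMod n) * ((-1:ℤ)^(j+1) : ZMod n) = 1 := by
    intro j
    push_cast
    rw [← pow_add]
    exact Even.neg_one_pow ⟨j+1, rfl⟩
  have hεne : ∀ j : ℕ, ((-1:ℤ)^(j+1) : ZMod n) ≠ 0 := by
    intro j h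
    have := hε2 j
    rw [h, mul_zero] at this
    exact zero_ne_one this
  have hxc : ∀ j : ℕ, ((-1:ℤ)^(j+1)) • ((1,0) : ZMod n × ZMod (m*n)) + ((j:ℤ)+1) • ((0,1) : ZMod n × ZMod (m*n))
      = ((((-1:ℤ)^(j+1) : ZMod n)), (((j:ℤ)+1 : ℤ) : ZMod (m*n))) := by
    intro j
    simp [Prod.ext_iff, zsmul_eq_mul]
  have hyc : ∀ j : ℕ, ((-1:ℤ)^(j+1)) • ((1,0) : ZMod n × ZMod (m*n)) - ((j:ℤ)) • ((0,1) : ZMod n × ZMod (m*n))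
      = ((((-1:ℤ)^(j+1) : ZMod n)), ((-(j:ℤ) : ℤ) : ZMod (m*n))) := by
    intro j
    simp [Prod.ext_iff, zsmul_eq_mul, sub_eq_add_neg]
  have hrc : ∀ j : ℕ, ((-1:ℤ)^(j+1)) • ((1,0) : ZMod n × ZMod (m*n))
      = ((((-1:ℤ)^(j+1) : ZMod n)), (0 : ZMod (m*n))) := by
    intro j
    simp [Prod.ext_iff, zsmul_eq_mul]
  -- per-j atom proof
  have part1 : ∀ j : ℕ, IsMinZS (ZMod n × ZMod (m*n)) (V j) ∧
      Multiset.card (V j) = m * n + n - 1 := by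
    intro j
    have hVj := hV j
    rw [hxc j, hyc j, hrc j] at hVj
    set ε : ZMod n := (((-1:ℤ)^(j+1) : ZMod n)) with hε
    have hcard : Multiset.card (V j) = m * n + n - 1 := by
      rw [hVj]
      simp [Multiset.card_replicate]
      omega
    have hsum : (V j).sum = 0 := by
      rw [hVj]
      simp only [Multiset.sum_add, Multiset.sum_replicate, Multiset.sum_pair]
      rw [Prod.ext_iff]
      constructor
      · simp only [Prod.fst_add, Prod.smul_mk, smul_zero, smul_eq_mul, Prod.fst_zero]
        rw [nsmul_eq_mul, Nat.cast_sub hn2, ZMod.natCast_self]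
        ring
      · simp only [Prod.snd_add, Prod.smul_mk, smul_zero, smul_eq_mul, Prod.snd_zero]
        rw [nsmul_eq_mul, mul_one, Nat.cast_sub (by omega : 1 ≤ m*n), ZMod.natCast_self]
        push_cast
        ring
    set x2 : ZMod (m*n) := (((j:ℤ)+1 : ℤ) : ZMod (m*n)) with hx2
    set y2 : ZMod (m*n) := ((-(j:ℤ) : ℤ) : ZMod (m*n)) with hy2
    have hεsq : ε * ε = 1 := hε2 j
    have key : ∀ k : ℕ, (k : ZMod n) * ε = 0 → n ∣ k := by
      intro k hk
      have h0 : (k : ZMod n) = 0 := by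
        have h' := congrArg (· * ε) hk
        simpa [mul_assoc, hεsq] using h'
      exact (ZMod.natCast_eq_zero_iff k n).1 h0
    have key2 : ∀ k : ℕ, (k : ZMod (m*n)) = 0 → (m*n) ∣ k := fun k hk =>
      (ZMod.natCast_eq_zero_iff k (m*n)).1 hk
    refine ⟨⟨?_, hsum, ?_⟩, hcard⟩
    · intro h0
      rw [h0] at hcard
      simp at hcard
      omega
    · intro T hT hT0 hTne hsum0
      rw [hVj] at hT
      obtain ⟨AB, C, hAB, hC, rfl⟩ := my_le_add_decomp hT
      obtain ⟨A, B, hA, hB, rfl⟩ := my_le_add_decomp hAB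
      obtain ⟨a, ha, rfl⟩ := Multiset.le_replicate_iff.1 hA
      obtain ⟨c, hc, rfl⟩ := Multiset.le_replicate_iff.1 hC
      have hB' : B ≤ ({(ε, x2)} : Multiset _) + {(ε, y2)} := hB
      obtain ⟨B1, B2, hB1, hB2, rfl⟩ := my_le_add_decomp hB'
      have h1 := congrArg Prod.fst hsum0
      have h2 := congrArg Prod.snd hsum0
      simp only [Multiset.sum_add, Multiset.sum_replicate, Prod.fst_add, Prod.snd_add,
        Prod.smul_mk, smul_zero, nsmul_eq_mul, mul_one, smul_eq_mul,
        Prod.fst_zero, Prod.snd_zero] at h1 h2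
      rcases Multiset.le_singleton.1 hB1 with rfl | rfl <;>
        rcases Multiset.le_singleton.1 hB2 with rfl | rfl
      · -- B = 0 : T = 0
        simp only [Multiset.sum_zero, add_zero, zero_add, Prod.fst_zero, Prod.snd_zero] at h1 h2
        have hc0 : c = 0 := Nat.eq_zero_of_dvd_of_lt (key c h1) (by omega)
        have ha0 : a = 0 := Nat.eq_zero_of_dvd_of_lt (key2 a h2) (by omega)
        subst hc0 ha0
        exact hT0 (by simp)
      · -- B = {x}
        simp only [Multiset.sum_zero, Multiset.sum_singleton, Prod.fst_zero, Prod.snd_zero, add_zero, zero_add] at h1 h2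
        have hd : ((c+1 : ℕ) : ZMod n) * ε = 0 := by push_cast; linear_combination h1
        have := Nat.le_of_dvd (by omega) (key _ hd)
        omega
      · -- B = {y}
        simp only [Multiset.sum_zero, Multiset.sum_singleton, Prod.fst_zero, Prod.snd_zero, add_zero, zero_add] at h1 h2
        have hd : ((c+1 : ℕ) : ZMod n) * ε = 0 := by push_cast; linear_combination h1
        have := Nat.le_of_dvd (by omega) (key _ hd)
        omega
      · -- B = {x, y} : T = V j
        simp only [Multiset.sum_singleton] at h1 h2
        have hd : ((c+2 : ℕ) : ZMod n) * ε = 0 := by push_cast; linear_combination h1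
        have hcn : c = n - 2 := by
          have := Nat.le_of_dvd (by omega) (key _ hd)
          omega
        rw [hx2, hy2] at h2
        have hd2 : ((a+1 : ℕ) : ZMod (m*n)) = 0 := by push_cast at h2 ⊢; linear_combination h2
        have han : a = m * n - 1 := by
          have := Nat.le_of_dvd (by omega) (key2 _ hd2)
          omega
        subst hcn han
        refine hTne ?_
        rw [hVj]
        rfl
  refine ⟨fun j _ => part1 j, ?_⟩
  -- Part 2
  obtain ⟨K, hK⟩ := hneven.mul_left m
  set e1' : ZMod n × ZMod (m*n) := (1, 0) with he1'
  set xx : ℕ → ZMod n × ZMod (m*n) :=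
    fun j => ((((-1:ℤ)^(j+1) : ZMod n)), (((j:ℤ)+1 : ℤ) : ZMod (m*n))) with hxx
  set yy : ℕ → ZMod n × ZMod (m*n) :=
    fun j => ((((-1:ℤ)^(j+1) : ZMod n)), ((-(j:ℤ) : ℤ) : ZMod (m*n))) with hyy
  set rr : ℕ → ZMod n × ZMod (m*n) :=
    fun j => ((((-1:ℤ)^(j+1) : ZMod n)), (0 : ZMod (m*n))) with hrr
  have hVj' : ∀ j : ℕ, V j = Multiset.replicate (m*n-1) ((0,1) : ZMod n × ZMod (m*n)) +
      {xx j, yy j} + Multiset.replicate (n-2) (rr j) := by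
    intro j
    rw [hV j, hxc j, hyc j, hrc j]
  have hneg : ∀ j : ℕ, -(xx j) = yy (j+1) := by
    intro j
    rw [hxx, hyy]
    simp only [Prod.mk.injEq, Prod.neg_mk]
    constructor
    · push_cast
      ring
    · push_cast
      ring
  have hneg0 : -(xx (m*n-1)) = yy 0 := by
    rw [hxx, hyy]
    simp only [Prod.mk.injEq, Prod.neg_mk]
    constructor
    · rw [show m*n-1+1 = m*n by omega]
      have hb : ((-1:ℤ) : ZMod n) = -1 := by push_cast; ring
      rw [hb, Even.neg_one_pow ⟨K, hK⟩, pow_one]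
    · rw [show ((m*n-1 : ℕ) : ℤ) + 1 = ((m*n : ℕ) : ℤ) by omega]
      simp only [Int.cast_natCast, Int.cast_neg, Nat.cast_zero, ZMod.natCast_self]
      simp
  have hxne : ∀ j : ℕ, xx j ≠ 0 := by
    intro j h
    exact hεne j (congrArg Prod.fst h)
  have he1ne : e1' ≠ (0 : ZMod n × ZMod (m*n)) := by
    intro h
    exact one_ne_zero (congrArg Prod.fst h)
  -- the factorization
  refine ⟨((Finset.range (m*n)).val.map fun j => ({xx j, -(xx j)} : Multiset (ZMod n × ZMod (m*n)))) +
      Multiset.replicate (K*(n-2)) ({e1', -e1'} : Multiset (ZMod n × ZMod (m*n))), ?_, ?_⟩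
  · intro U hU
    rcases Multiset.mem_add.1 hU with hU | hU
    · obtain ⟨j, -, rfl⟩ := Multiset.mem_map.1 hU
      exact my_pair_isMinZS (hxne j) (neg_ne_zero.2 (hxne j)) (add_neg_cancel _)
    · rw [Multiset.eq_of_mem_replicate hU]
      exact my_pair_isMinZS he1ne (neg_ne_zero.2 he1ne) (add_neg_cancel _)
  · have hsplit : (∑ j ∈ Finset.range (m*n), V j) =
        Multiset.replicate ((m*n-1)*(m*n)) ((0,1) : ZMod n × ZMod (m*n)) +
        ((∑ j ∈ Finset.range (m*n), ({xx j, yy j} : Multiset (ZMod n × ZMod (m*n)))) +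
         (∑ j ∈ Finset.range (m*n), Multiset.replicate (n-2) (rr j))) := by
      rw [Finset.sum_congr rfl (fun j _ => hVj' j)]
      rw [Finset.sum_add_distrib, Finset.sum_add_distrib, Finset.sum_const, Finset.card_range,
        Multiset.nsmul_replicate, Nat.mul_comm (m*n) (m*n-1), add_assoc]
    rw [hsplit, add_tsub_cancel_left, Multiset.sum_add,
      ← Finset.sum_eq_multiset_sum (Finset.range (m*n))
        (fun j => ({xx j, -(xx j)} : Multiset (ZMod n × ZMod (m*n)))),
      Multiset.sum_replicate]
    have claimA : (∑ j ∈ Finset.range (m*n), ({xx j, -(xx j)} : Multiset (ZMod n × ZMod (m*n))))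
        = ∑ j ∈ Finset.range (m*n), ({xx j, yy j} : Multiset (ZMod n × ZMod (m*n))) := by
      have h1 : ∀ j:ℕ, ({xx j, -(xx j)} : Multiset (ZMod n × ZMod (m*n))) = {xx j} + {-(xx j)} :=
        fun j => rfl
      have h2 : ∀ j:ℕ, ({xx j, yy j} : Multiset (ZMod n × ZMod (m*n))) = {xx j} + {yy j} :=
        fun j => rfl
      simp only [h1, h2, Finset.sum_add_distrib]
      congr 1
      obtain ⟨N, hN⟩ : ∃ N, m*n = N + 1 := ⟨m*n-1, by omega⟩
      rw [show Finset.range (m*n) = Finset.range (N+1) from by rw [hN],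
        Finset.sum_range_succ, Finset.sum_range_succ']
      congr 1
      · exact Finset.sum_congr rfl fun i _ => congrArg (fun z => ({z} : Multiset _)) (hneg i)
      · exact congrArg (fun z => ({z} : Multiset _)) (by rw [show N = m*n-1 by omega, hneg0])
    have claimB : ∀ p : ℕ, ∑ j ∈ Finset.range (2*p), Multiset.replicate (n-2) (rr j)
        = Multiset.replicate (p*(n-2)) e1' + Multiset.replicate (p*(n-2)) (-e1') := by
      intro p
      induction p with
      | zero => simp
      | succ q ih =>
        rw [show 2*(q+1) = 2*q+1+1 by ring, Finset.sum_range_succ, Finset.sum_range_succ, ih]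
        have hb : ((-1:ℤ) : ZMod n) = -1 := by push_cast; ring
        have hre : rr (2*q+1) = e1' := by
          rw [hrr, he1']
          simp only
          rw [hb, Even.neg_one_pow ⟨q+1, by ring⟩]
        have hro : rr (2*q) = -e1' := by
          rw [hrr, he1']
          simp only [Prod.neg_mk, neg_zero]
          rw [hb, Odd.neg_one_pow ⟨q, by ring⟩]
        rw [hre, hro, show (q+1)*(n-2) = q*(n-2) + (n-2) by ring, Multiset.replicate_add,
          Multiset.replicate_add]
        abel
    rw [claimA]
    congr 1
    rw [show Finset.range (m*n) = Finset.range (2*K) from by rw [show m*n = 2*K by omega],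
      claimB K]
    rw [show ({e1', -e1'} : Multiset (ZMod n × ZMod (m*n))) = {e1'} + {-e1'} from rfl,
      smul_add, Multiset.nsmul_singleton, Multiset.nsmul_singleton]
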